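/- Let A ∈ M_m(ℂ) and let G be the set of all cluster points of the sequence of powers (Aⁿ)_{n∈ℕ} in M_m(ℂ). Then: (i) G is closed under matrix multiplication: S, T ∈ G implies S·T ∈ G; (ii) G is a closed subset of M_m(ℂ); (iii) G is commutative: S·T = T·S for all S, T ∈ G; (iv) if G is nonempty, there exists E ∈ G such that S·E = E·S = S for all S ∈ G, and for every S ∈ G there exists T ∈ G with S·T = E. Hence G, if nonempty, is an abelian compact group under matrix multiplication. -/

import Mathlib

open Matrix Filter Topology

section helpers
variable {m : ℕ} (A : Matrix (Fin m) (Fin m) ℂ)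
lemma exists_subseq {S : Matrix (Fin m) (Fin m) ℂ}
    (h : MapClusterPt S atTop fun n => A ^ n) :
    ∃ φ : ℕ → ℕ, StrictMono φ ∧ Tendsto (fun k => A ^ φ k) atTop (𝓝 S) := by
  haveI : FirstCountableTopology (Matrix (Fin m) (Fin m) ℂ) :=
    inferInstanceAs (FirstCountableTopology (Fin m → Fin m → ℂ))
  obtain ⟨ψ, hψ, h2⟩ := TopologicalSpace.FirstCountableTopology.tendsto_subseq h
  exact ⟨ψ, hψ, h2⟩

lemma clusterPt_of_exponents {S : Matrix (Fin m) (Fin m) ℂ} (p : ℕ → ℕ)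
    (hp : Tendsto p atTop atTop)
    (h : Tendsto (fun k => A ^ p k) atTop (𝓝 S)) :
    MapClusterPt S atTop (fun n => A ^ n) :=
  MapClusterPt.of_comp hp h.mapClusterPt

lemma commute_of_cluster {S : Matrix (Fin m) (Fin m) ℂ}
    (h : MapClusterPt S atTop fun n => A ^ n) : Commute A S := by
  obtain ⟨φ, hφ, hc⟩ := exists_subseq A h
  have h1 : Tendsto (fun k => A * A ^ φ k) atTop (𝓝 (A * S)) :=
    (tendsto_const_nhds.mul hc)
  have h2 : Tendsto (fun k => A ^ φ k * A) atTop (𝓝 (S * A)) :=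
    (hc.mul tendsto_const_nhds)
  have : (fun k => A * A ^ φ k) = fun k => A ^ φ k * A := by
    funext k; exact ((Commute.refl A).pow_right (φ k)).eq
  rw [this] at h1
  exact tendsto_nhds_unique h1 h2

lemma commute_cluster_pair {S T : Matrix (Fin m) (Fin m) ℂ}
    (hS : MapClusterPt S atTop fun n => A ^ n)
    (hT : MapClusterPt T atTop fun n => A ^ n) : S * T = T * S := by
  obtain ⟨φ, hφ, hc⟩ := exists_subseq A hS
  have hcomm : ∀ k, A ^ φ k * T = T * A ^ φ k := fun k =>
    ((commute_of_cluster A hT).pow_left (φ k))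
  have h1 : Tendsto (fun k => A ^ φ k * T) atTop (𝓝 (S * T)) := hc.mul tendsto_const_nhds
  have h2 : Tendsto (fun k => T * A ^ φ k) atTop (𝓝 (T * S)) := tendsto_const_nhds.mul hc
  rw [funext hcomm] at h1
  exact tendsto_nhds_unique h1 h2

lemma mul_mem_cluster {S T : Matrix (Fin m) (Fin m) ℂ}
    (hS : MapClusterPt S atTop fun n => A ^ n)
    (hT : MapClusterPt T atTop fun n => A ^ n) :
    MapClusterPt (S * T) atTop fun n => A ^ n := by
  obtain ⟨φ, hφ, hcφ⟩ := exists_subseq A hS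
  obtain ⟨ψ, hψ, hcψ⟩ := exists_subseq A hT
  refine clusterPt_of_exponents A (fun k => φ k + ψ k) ?_ ?_
  · exact tendsto_atTop_mono (fun k => Nat.le_add_right _ _)
      (hφ.tendsto_atTop)
  · have : (fun k => A ^ (φ k + ψ k)) = fun k => A ^ φ k * A ^ ψ k := by
      funext k; rw [pow_add]
    rw [this]
    exact hcφ.mul hcψ




lemma pow_mulVec_eig {μ : ℂ} {v : Fin m → ℂ} (h : A *ᵥ v = μ • v) (n : ℕ) :
    A ^ n *ᵥ v = μ ^ n • v := by
  induction n with
  | zero => simp [Matrix.one_mulVec]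
  | succ n ih =>
      rw [pow_succ, ← Matrix.mulVec_mulVec]
      · rw [h, Matrix.mulVec_smul, ih, smul_smul, pow_succ]
        ring_nf

lemma pow_mulVec_jordan {μ : ℂ} {v w : Fin m → ℂ} (hv : A *ᵥ v = μ • v + w)
    (hw : A *ᵥ w = μ • w) (n : ℕ) :
    A ^ n *ᵥ v = μ ^ n • v + ((n : ℂ) * μ ^ (n - 1)) • w := by
  induction n with
  | zero => simp
  | succ n ih =>
      rw [pow_succ', ← Matrix.mulVec_mulVec, ih, Matrix.mulVec_add,
        Matrix.mulVec_smul, Matrix.mulVec_smul, hv, hw]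
      have hcoef : μ ^ n + ((n : ℂ) * μ ^ (n - 1)) * μ = ((n : ℂ) + 1) * μ ^ n := by
        cases n with
        | zero => simp
        | succ k =>
            have : ((k + 1 : ℕ) : ℂ) * μ ^ (k + 1 - 1) * μ = ((k + 1 : ℕ) : ℂ) * μ ^ (k + 1) := by
              rw [Nat.add_sub_cancel, mul_assoc, ← pow_succ]
            push_cast at this ⊢
            rw [this]; ring
      rw [smul_add, smul_smul, smul_smul]
      rw [add_assoc, ← add_smul, hcoef, Nat.add_sub_cancel, pow_succ]
      push_cast
      ring_nf

section Bound

variable {φ : ℕ → ℕ} (hφ : StrictMono φ)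
variable {C : ℝ} (hC : ∀ (v : Fin m → ℂ), ∃ C, ∀ k, ‖(A ^ φ k) *ᵥ v‖ ≤ C)

include hφ hC

lemma eig_norm_le {μ : ℂ} {v : Fin m → ℂ} (hv : v ≠ 0) (h : A *ᵥ v = μ • v) :
    ‖μ‖ ≤ 1 := by
  by_contra hlt
  push_neg at hlt
  obtain ⟨D, hD⟩ := hC v
  have hvpos : (0:ℝ) < ‖v‖ := norm_pos_iff.mpr hv
  have hb : ∀ k, ‖μ‖ ^ φ k * ‖v‖ ≤ D := by
    intro k
    have := hD k
    rwa [pow_mulVec_eig A h, norm_smul, norm_pow] at this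
  have ht : Tendsto (fun k => ‖μ‖ ^ φ k * ‖v‖) atTop atTop := by
    exact (tendsto_pow_atTop_atTop_of_one_lt hlt).comp hφ.tendsto_atTop
      |>.atTop_mul_const hvpos
  obtain ⟨k, hk⟩ := (ht.eventually_gt_atTop D).exists
  exact absurd (hb k) (not_le.mpr hk)

lemma jordan_w_eq_zero {μ : ℂ} (hμ : ‖μ‖ = 1) {v w : Fin m → ℂ}
    (hv : A *ᵥ v = μ • v + w) (hw : A *ᵥ w = μ • w) : w = 0 := by
  by_contra hw0
  obtain ⟨D, hD⟩ := hC v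
  have hb : ∀ k, (φ k : ℝ) * ‖w‖ - ‖v‖ ≤ D := by
    intro k
    have h1 := hD k
    rw [pow_mulVec_jordan A hv hw] at h1
    have h2 : ‖((φ k : ℂ) * μ ^ (φ k - 1)) • w‖
        ≤ ‖μ ^ φ k • v + ((φ k : ℂ) * μ ^ (φ k - 1)) • w‖ + ‖μ ^ φ k • v‖ := by
      calc ‖((φ k : ℂ) * μ ^ (φ k - 1)) • w‖
          = ‖(μ ^ φ k • v + ((φ k : ℂ) * μ ^ (φ k - 1)) • w) - μ ^ φ k • v‖ := by
            rw [add_sub_cancel_left]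
        _ ≤ _ := norm_sub_le _ _
    have h3 : ‖((φ k : ℂ) * μ ^ (φ k - 1)) • w‖ = (φ k : ℝ) * ‖w‖ := by
      rw [norm_smul, norm_mul, norm_pow, hμ, one_pow, mul_one, Complex.norm_natCast]
    have h4 : ‖μ ^ φ k • v‖ = ‖v‖ := by
      rw [norm_smul, norm_pow, hμ, one_pow, one_mul]
    rw [h3, h4] at h2
    linarith
  have hwpos : (0:ℝ) < ‖w‖ := norm_pos_iff.mpr hw0
  have ht : Tendsto (fun k => (φ k : ℝ) * ‖w‖ - ‖v‖) atTop atTop := by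
    apply Filter.tendsto_atTop_add_const_right
    exact (tendsto_natCast_atTop_atTop.comp hφ.tendsto_atTop).atTop_mul_const hwpos
  obtain ⟨k, hk⟩ := (ht.eventually_gt_atTop D).exists
  exact absurd (hb k) (not_le.mpr hk)

end Bound




-- `gen_small`: geometric recurrence bound, no cluster hypothesis needed
lemma gen_small {μ : ℂ} (hμ : ‖μ‖ < 1) :
    ∀ d (v : Fin m → ℂ), ((A - μ • 1) ^ d) *ᵥ v = 0 →
      ∃ C, ∀ n, ‖A ^ n *ᵥ v‖ ≤ C := by
  intro d
  induction d with
  | zero =>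
      intro v hv
      rw [pow_zero, Matrix.one_mulVec] at hv
      exact ⟨0, fun n => by simp [hv, Matrix.mulVec_zero]⟩
  | succ d ih =>
      intro v hv
      set N := A - μ • (1 : Matrix (Fin m) (Fin m) ℂ) with hN
      set w := N *ᵥ v with hw
      have hNd : (N ^ d) *ᵥ w = 0 := by
        rw [hw, Matrix.mulVec_mulVec, ← pow_succ]
        exact hv
      obtain ⟨D, hD⟩ := ih w hNd
      have hD0 : 0 ≤ D := le_trans (norm_nonneg _) (hD 0)
      have hAv : A *ᵥ v = μ • v + w := by
        rw [hw, hN, Matrix.sub_mulVec, Matrix.smul_mulVec, Matrix.one_mulVec]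
        abel
      have hq : 0 ≤ ‖μ‖ := norm_nonneg μ
      set q := ‖μ‖
      set C := max ‖v‖ (D / (1 - q)) with hCdef
      have hC0 : ‖v‖ ≤ C := le_max_left _ _
      have hDC : D ≤ (1 - q) * C := by
        have h1 : D / (1 - q) ≤ C := le_max_right _ _
        have h2 : 0 < 1 - q := by linarith
        calc D = (1 - q) * (D / (1 - q)) := by field_simp
          _ ≤ (1 - q) * C := by nlinarith
      refine ⟨C, fun n => ?_⟩
      induction n with
      | zero => simpa [Matrix.one_mulVec] using hC0
      | succ n ihn =>
          have hrec : A ^ (n + 1) *ᵥ v = μ • (A ^ n *ᵥ v) + A ^ n *ᵥ w := by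
            rw [pow_succ, ← Matrix.mulVec_mulVec, hAv, Matrix.mulVec_add, Matrix.mulVec_smul]
          rw [hrec]
          calc ‖μ • (A ^ n *ᵥ v) + A ^ n *ᵥ w‖
              ≤ ‖μ • (A ^ n *ᵥ v)‖ + ‖A ^ n *ᵥ w‖ := norm_add_le _ _
            _ = q * ‖A ^ n *ᵥ v‖ + ‖A ^ n *ᵥ w‖ := by rw [norm_smul]
            _ ≤ q * C + D := by
                have := hD n
                have hmul : q * ‖A ^ n *ᵥ v‖ ≤ q * C := by nlinarith [norm_nonneg (A ^ n *ᵥ v)]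
                linarith
            _ ≤ C := by linarith

section Bound
variable {φ : ℕ → ℕ} (hφ : StrictMono φ)
variable (hC : ∀ (v : Fin m → ℂ), ∃ C, ∀ k, ‖(A ^ φ k) *ᵥ v‖ ≤ C)


include hφ hC in
lemma gen_zero {μ : ℂ} (hμ : 1 < ‖μ‖) :
    ∀ d (v : Fin m → ℂ), ((A - μ • 1) ^ d) *ᵥ v = 0 → v = 0 := by
  intro d
  induction d with
  | zero => intro v hv; rwa [pow_zero, Matrix.one_mulVec] at hv
  | succ d ih =>
      intro v hv
      have h1 : ((A - μ • 1) ^ d) *ᵥ ((A - μ • 1) *ᵥ v) = 0 := by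
        rw [Matrix.mulVec_mulVec, ← pow_succ]; exact hv
      have h2 : (A - μ • 1) *ᵥ v = 0 := ih _ h1
      have heig : A *ᵥ v = μ • v := by
        rw [Matrix.sub_mulVec, Matrix.smul_mulVec, Matrix.one_mulVec, sub_eq_zero] at h2
        exact h2
      by_contra hv0
      exact absurd (eig_norm_le A hφ hC hv0 heig) (not_le.mpr hμ)

include hφ hC in
lemma gen_semisimple {μ : ℂ} (hμ : ‖μ‖ = 1) :
    ∀ d (v : Fin m → ℂ), ((A - μ • 1) ^ d) *ᵥ v = 0 → (A - μ • 1) *ᵥ v = 0 := by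
  intro d
  induction d with
  | zero =>
      intro v hv
      rw [pow_zero, Matrix.one_mulVec] at hv
      simp [hv, Matrix.mulVec_zero]
  | succ d ih =>
      intro v hv
      have h1 : ((A - μ • 1) ^ d) *ᵥ ((A - μ • 1) *ᵥ v) = 0 := by
        rw [Matrix.mulVec_mulVec, ← pow_succ]; exact hv
      have h2 : (A - μ • 1) *ᵥ ((A - μ • 1) *ᵥ v) = 0 := ih _ h1
      set w := (A - μ • 1) *ᵥ v with hwdef
      have hw : A *ᵥ w = μ • w := by
        rw [Matrix.sub_mulVec, Matrix.smul_mulVec, Matrix.one_mulVec, sub_eq_zero] at h2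
        exact h2
      have hv' : A *ᵥ v = μ • v + w := by
        rw [hwdef, Matrix.sub_mulVec, Matrix.smul_mulVec, Matrix.one_mulVec]
        abel
      exact jordan_w_eq_zero A hφ hC hμ hv' hw
end Bound



lemma mulVecLin_pow' (B : Matrix (Fin m) (Fin m) ℂ) (k : ℕ) :
    Matrix.mulVecLin (B ^ k) = (Matrix.mulVecLin B) ^ k := by
  induction k with
  | zero => simp [Matrix.mulVecLin_one]; rfl
  | succ k ih => rw [pow_succ, Matrix.mulVecLin_mul, ih, pow_succ]; rfl

lemma transfer_gen (μ : ℂ) (k : ℕ) (v : Fin m → ℂ) :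
    ((A - μ • 1) ^ k) *ᵥ v = ((Matrix.mulVecLin A - μ • 1) ^ k) v := by
  have h1 : Matrix.mulVecLin (A - μ • 1) = Matrix.mulVecLin A - μ • 1 := by
    refine LinearMap.ext fun w => ?_
    show (A - μ • 1) *ᵥ w = A *ᵥ w - μ • w
    rw [Matrix.sub_mulVec, Matrix.smul_mulVec, Matrix.one_mulVec]
  rw [← h1, ← mulVecLin_pow']
  rfl

section Bound2
variable {φ : ℕ → ℕ} (hφ : StrictMono φ)
variable (hC : ∀ (v : Fin m → ℂ), ∃ C, ∀ k, ‖(A ^ φ k) *ᵥ v‖ ≤ C)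
include hφ hC

lemma bounded_on_gen' {μ : ℂ} (d : ℕ) (v : Fin m → ℂ)
    (hv : ((A - μ • 1) ^ d) *ᵥ v = 0) : ∃ C, ∀ n, ‖A ^ n *ᵥ v‖ ≤ C := by
  rcases lt_trichotomy ‖μ‖ 1 with h | h | h
  · exact gen_small A h d v hv
  · have h2 := gen_semisimple A hφ hC h d v hv
    have heig : A *ᵥ v = μ • v := by
      rw [Matrix.sub_mulVec, Matrix.smul_mulVec, Matrix.one_mulVec, sub_eq_zero] at h2
      exact h2
    refine ⟨‖v‖, fun n => ?_⟩
    rw [pow_mulVec_eig A heig n, norm_smul, norm_pow, h, one_pow, one_mul]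
  · have := gen_zero A hφ hC h d v hv
    exact ⟨0, fun n => by simp [this, Matrix.mulVec_zero]⟩

lemma bounded_all : ∀ v : Fin m → ℂ, ∃ C, ∀ n, ‖A ^ n *ᵥ v‖ ≤ C := by
  intro v
  set f : Module.End ℂ (Fin m → ℂ) := Matrix.mulVecLin A with hf
  have htop := Module.End.iSup_maxGenEigenspace_eq_top f
  have hv : v ∈ ⨆ μ, f.maxGenEigenspace μ := by rw [htop]; exact Submodule.mem_top
  refine Submodule.iSup_induction'
    (motive := fun x _ => ∃ C, ∀ n, ‖A ^ n *ᵥ x‖ ≤ C) _ ?_ ?_ ?_ hv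
  · intro μ x hx
    rw [Module.End.mem_maxGenEigenspace] at hx
    obtain ⟨k, hk⟩ := hx
    refine bounded_on_gen' A hφ hC (μ := μ) k x ?_
    rw [transfer_gen]
    exact hk
  · exact ⟨0, fun n => by simp [Matrix.mulVec_zero]⟩
  · rintro x y hx hy ⟨C1, h1⟩ ⟨C2, h2⟩
    refine ⟨C1 + C2, fun n => ?_⟩
    rw [Matrix.mulVec_add]
    exact (norm_add_le _ _).trans (add_le_add (h1 n) (h2 n))

end Bound2



lemma entries_bounded (hball : ∀ v : Fin m → ℂ, ∃ C, ∀ n, ‖A ^ n *ᵥ v‖ ≤ C) : ∃ C : ℝ, ∀ (n : ℕ) (i j : Fin m), ‖(A ^ n) i j‖ ≤ C := by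
  choose g hg using fun j : Fin m => hball (Pi.single j 1)
  refine ⟨∑ j, max (g j) 0, fun n i j => ?_⟩
  have h1 : (A ^ n) i j = ((A ^ n) *ᵥ Pi.single j 1) i := by
    rw [Matrix.mulVec_single]
    simp
  rw [h1]
  calc ‖((A ^ n) *ᵥ Pi.single j 1) i‖ ≤ ‖(A ^ n) *ᵥ Pi.single j 1‖ :=
        norm_le_pi_norm _ i
    _ ≤ g j := hg j n
    _ ≤ max (g j) 0 := le_max_left _ _
    _ ≤ ∑ j', max (g j') 0 :=
        Finset.single_le_sum (f := fun j' => max (g j') 0) (fun j' _ => le_max_right _ _)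
          (Finset.mem_univ j)

lemma box_compact (C : ℝ) :
    IsCompact {M : Matrix (Fin m) (Fin m) ℂ | ∀ i j, ‖M i j‖ ≤ C} := by
  have h : IsCompact (Set.pi Set.univ fun _ : Fin m =>
      Set.pi Set.univ fun _ : Fin m => Metric.closedBall (0 : ℂ) C) :=
    isCompact_univ_pi fun i => isCompact_univ_pi fun j => isCompact_closedBall _ _
  have he : {M : Matrix (Fin m) (Fin m) ℂ | ∀ i j, ‖M i j‖ ≤ C} =
      Set.pi Set.univ fun _ : Fin m => Set.pi Set.univ fun _ : Fin m =>
        Metric.closedBall (0 : ℂ) C := by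
    ext M
    constructor
    · intro hM i _ j _
      simpa [Metric.mem_closedBall, dist_zero_right] using hM i j
    · intro hM i j
      have := hM i (Set.mem_univ i) j (Set.mem_univ j)
      simpa [Metric.mem_closedBall, dist_zero_right] using this
  rw [he]
  exact h



lemma subseq_vec_bounded {S₀ : Matrix (Fin m) (Fin m) ℂ} (φ : ℕ → ℕ)
    (hconv : Tendsto (fun k => A ^ φ k) atTop (𝓝 S₀)) :
    ∀ v : Fin m → ℂ, ∃ C, ∀ k, ‖(A ^ φ k) *ᵥ v‖ ≤ C := by
  intro v
  have hcont : Continuous fun M : Matrix (Fin m) (Fin m) ℂ => M *ᵥ v :=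
    continuous_id.matrix_mulVec continuous_const
  have hvc : Tendsto (fun k => (A ^ φ k) *ᵥ v) atTop (𝓝 (S₀ *ᵥ v)) :=
    (hcont.tendsto S₀).comp hconv
  obtain ⟨C, hC⟩ := hvc.norm.bddAbove_range
  exact ⟨C, fun k => hC ⟨k, rfl⟩⟩

lemma exists_div {K : Set (Matrix (Fin m) (Fin m) ℂ)} (hK : IsCompact K)
    (horb : ∀ n, A ^ n ∈ K) {S T : Matrix (Fin m) (Fin m) ℂ}
    (hS : MapClusterPt S atTop fun n => A ^ n)
    (hT : MapClusterPt T atTop fun n => A ^ n) :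
    ∃ R, (MapClusterPt R atTop fun n => A ^ n) ∧ S * R = T := by
  haveI : FirstCountableTopology (Matrix (Fin m) (Fin m) ℂ) :=
    inferInstanceAs (FirstCountableTopology (Fin m → Fin m → ℂ))
  obtain ⟨a, ha, hca⟩ := exists_subseq A hS
  obtain ⟨b, hb, hcb⟩ := exists_subseq A hT
  set c : ℕ → ℕ := fun k => b (2 * a k + k) with hcdef
  have hak : ∀ k, a k + k ≤ c k := fun k => by
    have h1 : 2 * a k + k ≤ b (2 * a k + k) := hb.le_apply
    simp only [hcdef]
    omega
  set p : ℕ → ℕ := fun k => c k - a k with hpdef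
  have hpk : ∀ k, k ≤ p k := fun k => by have := hak k; simp only [hpdef]; omega
  have hsum : ∀ k, a k + p k = c k := fun k => by have := hak k; simp only [hpdef]; omega
  have hcc : Tendsto (fun k => A ^ c k) atTop (𝓝 T) := by
    refine hcb.comp (tendsto_atTop_mono (fun k => ?_) tendsto_id)
    show id k ≤ 2 * a k + k
    simp only [id]
    omega
  have hmemp : ∀ k, A ^ p k ∈ K := fun k => horb _
  obtain ⟨R, hRK, θ, hθ, hconvR⟩ := hK.tendsto_subseq hmemp
  have hconvR' : Tendsto (fun i => A ^ p (θ i)) atTop (𝓝 R) := hconvR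
  refine ⟨R, ?_, ?_⟩
  · refine clusterPt_of_exponents A (fun i => p (θ i)) ?_ hconvR'
    exact tendsto_atTop_mono (fun i => le_trans (hθ.le_apply) (hpk (θ i))) tendsto_id
  · have hmul : Tendsto (fun i => A ^ a (θ i) * A ^ p (θ i)) atTop (𝓝 (S * R)) :=
      (hca.comp hθ.tendsto_atTop).mul hconvR'
    have heq : (fun i => A ^ a (θ i) * A ^ p (θ i)) = fun i => A ^ c (θ i) :=
      funext fun i => by rw [← pow_add, hsum]
    rw [heq] at hmul
    exact tendsto_nhds_unique hmul (hcc.comp hθ.tendsto_atTop)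

end helpers

/-- The set of cluster points of the powers of a matrix, if nonempty, is an abelian
compact group under matrix multiplication. -/
theorem stmt_12 (m : ℕ) (A : Matrix (Fin m) (Fin m) ℂ)
    (G : Set (Matrix (Fin m) (Fin m) ℂ))
    (hG : G = {S | MapClusterPt S Filter.atTop fun n => A ^ n}) :
    (∀ S ∈ G, ∀ T ∈ G, S * T ∈ G)
      ∧ IsClosed G
      ∧ (∀ S ∈ G, ∀ T ∈ G, S * T = T * S)
      ∧ (G.Nonempty → IsCompact G ∧
          ∃ E ∈ G, (∀ S ∈ G, S * E = S ∧ E * S = S) ∧ ∀ S ∈ G, ∃ T ∈ G, S * T = E) := by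
  subst hG
  refine ⟨?_, ?_, ?_, ?_⟩
  · intro S hS T hT
    exact mul_mem_cluster A hS hT
  · exact isClosed_setOf_clusterPt
  · intro S hS T hT
    exact commute_cluster_pair A hS hT
  · rintro ⟨S₀, hS₀⟩
    obtain ⟨φ, hφ, hconv⟩ := exists_subseq A hS₀
    have hC := subseq_vec_bounded A φ hconv
    have hball := bounded_all A hφ hC
    obtain ⟨C, hCC⟩ := entries_bounded A hball
    set K : Set (Matrix (Fin m) (Fin m) ℂ) := {M | ∀ i j, ‖M i j‖ ≤ C} with hKdef
    have hK : IsCompact K := box_compact C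
    have horb : ∀ n, A ^ n ∈ K := fun n i j => hCC n i j
    have hGK : {S | MapClusterPt S Filter.atTop fun n => A ^ n} ⊆ K := by
      intro S hS
      have hle : Filter.map (fun n => A ^ n) atTop ≤ 𝓟 K :=
        Filter.le_principal_iff.mpr (Filter.mem_map.mpr (Filter.Eventually.of_forall horb))
      have hcl : ClusterPt S (𝓟 K) := hS.clusterPt.mono hle
      have : S ∈ closure K := mem_closure_iff_clusterPt.mpr hcl
      rwa [hK.isClosed.closure_eq] at this
    refine ⟨hK.of_isClosed_subset isClosed_setOf_clusterPt hGK, ?_⟩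
    obtain ⟨E, hEG, hE⟩ := exists_div A hK horb hS₀ hS₀
    refine ⟨E, hEG, fun S hS => ?_, fun S hS => ?_⟩
    · obtain ⟨R, hRG, hR⟩ := exists_div A hK horb hS₀ hS
      have h1 : S * E = S := by
        calc S * E = S₀ * R * E := by rw [hR]
          _ = R * S₀ * E := by rw [commute_cluster_pair A hS₀ hRG]
          _ = R * (S₀ * E) := by rw [mul_assoc]
          _ = R * S₀ := by rw [hE]
          _ = S₀ * R := (commute_cluster_pair A hS₀ hRG).symm
          _ = S := hR
      exact ⟨h1, by rw [commute_cluster_pair A hEG hS]; exact h1⟩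
    · obtain ⟨T, hTG, hT⟩ := exists_div A hK horb hS hEG
      exact ⟨T, hTG, hT⟩
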